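/- (Theorem 3, bound on the number of prox-grad queries of the time-smoothed online prox-grad method.) Let g : ℝⁿ → ℝ ∪ {+∞} be proper, convex, lower semicontinuous and nonnegative, let η ∈ (0, 2/L), δ > 0, T ≥ 1, w ∈ {1, …, T}, and let f_t : ℝⁿ → ℝ (t = 1, …, T, with f_t ≡ 0 for t ≤ 0) be differentiable, L-smooth on dom g, and satisfy |f_t(x)| ≤ M for all x ∈ dom g. Let x₁ ∈ dom g and for each t = 1, …, T let y_t¹ = x_t, y_t^{k+1} = prox_{ηg}(y_t^k − η ∇S_{t,w}(y_t^k)) for k = 1, …, τ_t, where ‖P_η^g(y_t^k; ∇S_{t,w}(y_t^k))‖ > δ/w for each k = 1, …, τ_t, and x_{t+1} = y_t^{τ_t + 1}. Then the total number of prox-grad operations satisfies Σ_{t=1}^T τ_t ≤ 2w·(w·(g(x₁) + M) + 2MT) / ((2 − ηL)·η·δ²); in particular it is O(w²) whenever T = O(w). -/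

import Mathlib

noncomputable section
open Finset MeasureTheory
open scoped RealInnerProductSpace

def ProperConvexLsc {n : ℕ} (g : EuclideanSpace ℝ (Fin n) → WithTop ℝ) : Prop :=
  (∃ x, g x ≠ ⊤) ∧ LowerSemicontinuous g ∧
    ∀ x y : EuclideanSpace ℝ (Fin n), ∀ a b : ℝ, 0 ≤ a → 0 ≤ b → a + b = 1 →
      g (a • x + b • y) ≤ (a : WithTop ℝ) * g x + (b : WithTop ℝ) * g y

def IsProxPt {n : ℕ} (g : EuclideanSpace ℝ (Fin n) → WithTop ℝ) (η : ℝ)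
    (u p : EuclideanSpace ℝ (Fin n)) : Prop :=
  ∀ z : EuclideanSpace ℝ (Fin n),
    (η : WithTop ℝ) * g p + ((1 / 2 * ‖u - p‖ ^ 2 : ℝ) : WithTop ℝ) ≤
      (η : WithTop ℝ) * g z + ((1 / 2 * ‖u - z‖ ^ 2 : ℝ) : WithTop ℝ)

def IsProxFun {n : ℕ} (g : EuclideanSpace ℝ (Fin n) → WithTop ℝ) (η : ℝ)
    (prox : EuclideanSpace ℝ (Fin n) → EuclideanSpace ℝ (Fin n)) : Prop :=
  ∀ u, IsProxPt g η u (prox u) ∧ ∀ q, IsProxPt g η u q → q = prox u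

def proxRes {n : ℕ} (prox : EuclideanSpace ℝ (Fin n) → EuclideanSpace ℝ (Fin n)) (η : ℝ)
    (x d : EuclideanSpace ℝ (Fin n)) : EuclideanSpace ℝ (Fin n) :=
  η⁻¹ • (x - prox (x - η • d))

lemma descent_lemma {n : ℕ} {φ : EuclideanSpace ℝ (Fin n) → ℝ}
    {φ' : EuclideanSpace ℝ (Fin n) → EuclideanSpace ℝ (Fin n)}
    (hφ : ∀ z, HasGradientAt φ (φ' z) z) {L : ℝ} {y p : EuclideanSpace ℝ (Fin n)}
    (hlip : ∀ s ∈ Set.Icc (0:ℝ) 1, ‖φ' (y + s • (p - y)) - φ' y‖ ≤ L * s * ‖p - y‖) :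
    φ p ≤ φ y + ⟪φ' y, p - y⟫ + L / 2 * ‖p - y‖ ^ 2 := by
  set v := p - y with hv
  set χ : ℝ → ℝ := fun s => L / 2 * s ^ 2 * ‖v‖ ^ 2 + s * ⟪φ' y, v⟫ + φ y - φ (y + s • v)
    with hχ
  have hc : ∀ s : ℝ, HasDerivAt (fun s : ℝ => y + s • v) v s := by
    intro s
    simpa using ((hasDerivAt_id s).smul_const v).const_add y
  have hcomp : ∀ s : ℝ, HasDerivAt (fun s : ℝ => φ (y + s • v)) ⟪φ' (y + s • v), v⟫ s := by
    intro s
    have := ((hφ (y + s • v)).hasFDerivAt.comp_hasDerivAt s (hc s))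
    simpa [InnerProductSpace.toDual_apply_apply, Function.comp_def] using this
  have hχd : ∀ s : ℝ, HasDerivAt χ
      (L * s * ‖v‖ ^ 2 + ⟪φ' y, v⟫ - ⟪φ' (y + s • v), v⟫) s := by
    intro s
    have h1 : HasDerivAt (fun s : ℝ => L / 2 * s ^ 2 * ‖v‖ ^ 2 + s * ⟪φ' y, v⟫ + φ y)
        (L * s * ‖v‖ ^ 2 + ⟪φ' y, v⟫) s := by
      have : HasDerivAt (fun s : ℝ => L / 2 * s ^ 2 * ‖v‖ ^ 2) (L * s * ‖v‖ ^ 2) s := by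
        have := ((hasDerivAt_pow 2 s).const_mul (L / 2)).mul_const (‖v‖ ^ 2)
        exact this.congr_deriv (by ring)
      simpa using (this.add ((hasDerivAt_id s).mul_const ⟪φ' y, v⟫)).add_const (φ y)
    exact h1.sub (hcomp s)
  have hmono : MonotoneOn χ (Set.Icc (0:ℝ) 1) := by
    apply monotoneOn_of_deriv_nonneg (convex_Icc 0 1)
    · exact fun s _ => ((hχd s).differentiableAt.continuousAt).continuousWithinAt
    · exact fun s _ => ((hχd s).differentiableAt).differentiableWithinAt
    · intro s hs
      rw [interior_Icc] at hs
      rw [(hχd s).deriv]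
      have hinner : ⟪φ' (y + s • v) - φ' y, v⟫ ≤ L * s * ‖v‖ ^ 2 := by
        calc ⟪φ' (y + s • v) - φ' y, v⟫ ≤ ‖φ' (y + s • v) - φ' y‖ * ‖v‖ :=
              real_inner_le_norm _ _
          _ ≤ (L * s * ‖v‖) * ‖v‖ := by
              apply mul_le_mul_of_nonneg_right _ (norm_nonneg _)
              exact hlip s ⟨le_of_lt hs.1, le_of_lt hs.2⟩
          _ = L * s * ‖v‖ ^ 2 := by ring
      rw [inner_sub_left] at hinner
      linarith
  have h01 : χ 0 ≤ χ 1 := hmono (by norm_num) (by norm_num) (by norm_num)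
  have e0 : χ 0 = 0 := by simp [hχ]
  have e1 : y + (1:ℝ) • v = p := by simp [hv]
  rw [e0, hχ] at h01
  simp only [e1, one_pow, one_mul, mul_one] at h01
  linarith

lemma prox_finite {n : ℕ} {g : EuclideanSpace ℝ (Fin n) → WithTop ℝ} {η : ℝ}
    {u p x₀ : EuclideanSpace ℝ (Fin n)} {c : ℝ}
    (hp : IsProxPt g η u p) (hx₀ : g x₀ = (c : WithTop ℝ)) (hη : 0 < η) : g p ≠ ⊤ := by
  intro htop
  have := hp x₀
  rw [htop, hx₀, WithTop.mul_top (by exact_mod_cast hη.ne' : (η : WithTop ℝ) ≠ 0)] at this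
  rw [← WithTop.coe_mul, ← WithTop.coe_add, top_add] at this
  exact (WithTop.not_top_le_coe _) this

lemma prox_strong {n : ℕ} {g : EuclideanSpace ℝ (Fin n) → WithTop ℝ}
    (hgc : ∀ x y : EuclideanSpace ℝ (Fin n), ∀ a b : ℝ, 0 ≤ a → 0 ≤ b → a + b = 1 →
      g (a • x + b • y) ≤ (a : WithTop ℝ) * g x + (b : WithTop ℝ) * g y)
    {η : ℝ} (hη : 0 < η) {u p z : EuclideanSpace ℝ (Fin n)}
    (hp : IsProxPt g η u p) {gp gz : ℝ}
    (hgp : g p = (gp : WithTop ℝ)) (hgz : g z = (gz : WithTop ℝ)) :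
    η * gp + 1/2 * ‖u - p‖^2 + 1/2 * ‖z - p‖^2 ≤ η * gz + 1/2 * ‖u - z‖^2 := by
  set A := ‖u - p‖^2 with hA
  set B := ‖u - z‖^2 with hB
  set C := ‖z - p‖^2 with hC
  have hCnn : 0 ≤ C := by positivity
  have key : ∀ a : ℝ, 0 < a → a < 1 →
      η * gp + 1/2 * A + (1-a)/2 * C ≤ η * gz + 1/2 * B := by
    intro a ha0 ha1
    set m := (1-a) • p + a • z with hm
    have hgm_le : g m ≤ (((1-a) * gp + a * gz : ℝ) : WithTop ℝ) := by
      have := hgc p z (1-a) a (by linarith) (le_of_lt ha0) (by ring)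
      rw [hgp, hgz, ← WithTop.coe_mul, ← WithTop.coe_mul, ← WithTop.coe_add] at this
      exact this
    obtain ⟨gm, hgm, hgmle⟩ := WithTop.le_coe_iff.1 hgm_le
    have hiq := hp m
    rw [hgp, hgm, ← WithTop.coe_mul, ← WithTop.coe_mul, ← WithTop.coe_add,
      ← WithTop.coe_add, WithTop.coe_le_coe] at hiq
    have hsplit : u - m = (1-a) • (u - p) + a • (u - z) := by
      rw [hm]; module
    have hI : ‖u - m‖^2 = (1-a)^2 * A + 2*((1-a)*a)*⟪u-p, u-z⟫ + a^2 * B := by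
      rw [hsplit, norm_add_sq_real, norm_smul, norm_smul, real_inner_smul_left,
        real_inner_smul_right, Real.norm_eq_abs, Real.norm_eq_abs,
        abs_of_nonneg (by linarith : (0:ℝ) ≤ 1-a), abs_of_nonneg ha0.le]
      ring
    have hC2 : C = A - 2*⟪u-p, u-z⟫ + B := by
      have h : z - p = (u - p) - (u - z) := by module
      rw [hC, h, norm_sub_sq_real]
    nlinarith [hiq, hgmle, hI, hC2]
  apply le_of_forall_pos_le_add
  intro ε hε
  have ha0 : 0 < min (1/2) (ε/(C+1)) := lt_min (by norm_num) (by positivity)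
  have ha1 : min (1/2) (ε/(C+1)) < 1 := lt_of_le_of_lt (min_le_left _ _) (by norm_num)
  have h := key _ ha0 ha1
  have : min (1/2) (ε/(C+1)) * C / 2 ≤ ε := by
    have h1 : min (1/2) (ε/(C+1)) ≤ ε/(C+1) := min_le_right _ _
    have h2 : min (1/2) (ε/(C+1)) * C ≤ ε/(C+1) * C :=
      mul_le_mul_of_nonneg_right h1 hCnn
    have h3 : ε/(C+1) * C ≤ ε := by
      rw [div_mul_eq_mul_div, div_le_iff₀ (by linarith)]
      nlinarith
    linarith
  linarith

set_option maxHeartbeats 2000000 in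
theorem stmt4 {n : ℕ} (g : EuclideanSpace ℝ (Fin n) → WithTop ℝ)
    (hg : ProperConvexLsc g) (hg_nonneg : ∀ z, (0 : WithTop ℝ) ≤ g z)
    (prox : EuclideanSpace ℝ (Fin n) → EuclideanSpace ℝ (Fin n))
    (L η δ M : ℝ) (hL : 0 < L) (hη : 0 < η) (hη' : η < 2 / L) (hδ : 0 < δ) (hM : 0 < M)
    (hprox : IsProxFun g η prox)
    (T w : ℕ) (hT : 1 ≤ T) (hw1 : 1 ≤ w) (hwT : w ≤ T)
    (f : ℤ → EuclideanSpace ℝ (Fin n) → ℝ)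
    (f' : ℤ → EuclideanSpace ℝ (Fin n) → EuclideanSpace ℝ (Fin n))
    (hf0 : ∀ t ≤ (0 : ℤ), ∀ z, f t z = 0) (hf'0 : ∀ t ≤ (0 : ℤ), ∀ z, f' t z = 0)
    (hgrad : ∀ t z, HasGradientAt (f t) (f' t z) z)
    (hsmooth : ∀ t ∈ Finset.Icc (1 : ℤ) T, ∀ z₁ z₂ : EuclideanSpace ℝ (Fin n),
      g z₁ ≠ ⊤ → g z₂ ≠ ⊤ → ‖f' t z₁ - f' t z₂‖ ≤ L * ‖z₁ - z₂‖)
    (hbound : ∀ t ∈ Finset.Icc (1 : ℤ) T, ∀ z, g z ≠ ⊤ → |f t z| ≤ M)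
    (x : ℤ → EuclideanSpace ℝ (Fin n)) (y : ℤ → ℕ → EuclideanSpace ℝ (Fin n)) (τ : ℤ → ℕ)
    (g1 : ℝ) (hg1 : g (x 1) = (g1 : WithTop ℝ))
    (hinit : ∀ t ∈ Finset.Icc (1 : ℤ) T, y t 1 = x t)
    (hstep : ∀ t ∈ Finset.Icc (1 : ℤ) T, ∀ k, 1 ≤ k → k ≤ τ t →
      y t (k + 1) =
        prox (y t k - η • ((w : ℝ)⁻¹ • ∑ i ∈ Finset.Icc (t - w + 1) t, f' i (y t k))))
    (hres : ∀ t ∈ Finset.Icc (1 : ℤ) T, ∀ k, 1 ≤ k → k ≤ τ t →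
      δ / w <
        ‖proxRes prox η (y t k) ((w : ℝ)⁻¹ • ∑ i ∈ Finset.Icc (t - w + 1) t, f' i (y t k))‖)
    (hnext : ∀ t ∈ Finset.Icc (1 : ℤ) T, x (t + 1) = y t (τ t + 1)) :
    (∑ t ∈ Finset.Icc (1 : ℤ) T, (τ t : ℝ)) ≤
      2 * w * ((w : ℝ) * (g1 + M) + 2 * M * T) / ((2 - η * L) * η * δ ^ 2) := by
  obtain ⟨-, -, hgc⟩ := hg
  have hw0 : (0:ℝ) < w := by exact_mod_cast hw1
  have hηL : η * L < 2 := by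
    have := (lt_div_iff₀ hL).1 hη'
    linarith
  -- real-valued version of g
  set G : EuclideanSpace ℝ (Fin n) → ℝ := fun z => (g z).untopD 0 with hG
  have hGeq : ∀ z, g z ≠ ⊤ → g z = ((G z : ℝ) : WithTop ℝ) := by
    intro z hz
    obtain ⟨r, hr⟩ := WithTop.ne_top_iff_exists.1 hz
    rw [← hr]; simp [hG, ← hr]
  have hGnn : ∀ z, 0 ≤ G z := by
    intro z
    by_cases hz : g z = ⊤
    · simp [hG, hz]
    · have := hg_nonneg z
      rw [hGeq z hz] at this
      exact_mod_cast this
  -- convexity of domain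
  have hdom : ∀ z₁ z₂ : EuclideanSpace ℝ (Fin n), g z₁ ≠ ⊤ → g z₂ ≠ ⊤ →
      ∀ a : ℝ, 0 ≤ a → a ≤ 1 → g ((1-a) • z₁ + a • z₂) ≠ ⊤ := by
    intro z₁ z₂ h₁ h₂ a ha0 ha1
    have := hgc z₁ z₂ (1-a) a (by linarith) ha0 (by ring)
    rw [hGeq z₁ h₁, hGeq z₂ h₂, ← WithTop.coe_mul, ← WithTop.coe_mul, ← WithTop.coe_add]
      at this
    exact ne_top_of_le_ne_top (WithTop.coe_ne_top) this
  -- sliding average and its gradient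
  set φf : ℤ → EuclideanSpace ℝ (Fin n) → ℝ :=
    fun t z => (w:ℝ)⁻¹ * ∑ i ∈ Finset.Icc (t - w + 1) t, f i z with hφf
  set φg : ℤ → EuclideanSpace ℝ (Fin n) → EuclideanSpace ℝ (Fin n) :=
    fun t z => (w:ℝ)⁻¹ • ∑ i ∈ Finset.Icc (t - w + 1) t, f' i z with hφg
  have hφf_app : ∀ t z, φf t z = (w:ℝ)⁻¹ * ∑ i ∈ Finset.Icc (t - w + 1) t, f i z :=
    fun t z => by rw [hφf]
  have hφg_app : ∀ t z, φg t z = (w:ℝ)⁻¹ • ∑ i ∈ Finset.Icc (t - w + 1) t, f' i z :=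
    fun t z => by rw [hφg]
  have hφgrad : ∀ t z, HasGradientAt (φf t) (φg t z) z := by
    intro t z
    rw [hasGradientAt_iff_hasFDerivAt]
    have hsum : HasFDerivAt (fun z => ∑ i ∈ Finset.Icc (t - w + 1) t, f i z)
        (∑ i ∈ Finset.Icc (t - w + 1) t,
          (InnerProductSpace.toDual ℝ (EuclideanSpace ℝ (Fin n))) (f' i z)) z :=
      HasFDerivAt.fun_sum (fun i _ => (hasGradientAt_iff_hasFDerivAt.1 (hgrad i z)))
    have h2 := hsum.const_smul ((w:ℝ)⁻¹)
    have h3 : (InnerProductSpace.toDual ℝ (EuclideanSpace ℝ (Fin n))) (φg t z) =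
        (w:ℝ)⁻¹ • ∑ i ∈ Finset.Icc (t - w + 1) t,
          (InnerProductSpace.toDual ℝ (EuclideanSpace ℝ (Fin n))) (f' i z) := by
      rw [hφg_app]; rw [_root_.map_smul]; rw [map_sum]
    rw [h3]
    have h4 : φf t = fun z => (w:ℝ)⁻¹ • ∑ i ∈ Finset.Icc (t - w + 1) t, f i z := by
      funext z'; rw [hφf_app, smul_eq_mul]
    rw [h4]
    exact h2
  have hcard : ∀ t : ℤ, (Finset.Icc (t - w + 1) t).card = w := by
    intro t
    rw [Int.card_Icc]
    omega
  have hφlip : ∀ t, 1 ≤ t → t ≤ (T:ℤ) → ∀ z₁ z₂, g z₁ ≠ ⊤ → g z₂ ≠ ⊤ →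
      ‖φg t z₁ - φg t z₂‖ ≤ L * ‖z₁ - z₂‖ := by
    intro t ht1 htT z₁ z₂ h₁ h₂
    have hdiff : φg t z₁ - φg t z₂ =
        (w:ℝ)⁻¹ • ∑ i ∈ Finset.Icc (t - w + 1) t, (f' i z₁ - f' i z₂) := by
      rw [hφg_app, hφg_app, ← smul_sub, Finset.sum_sub_distrib]
    have hterm : ∀ i ∈ Finset.Icc (t - w + 1) t, ‖f' i z₁ - f' i z₂‖ ≤ L * ‖z₁ - z₂‖ := by
      intro i hi
      rw [Finset.mem_Icc] at hi
      by_cases hi0 : i ≤ 0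
      · rw [hf'0 i hi0, hf'0 i hi0]
        simp only [sub_zero, norm_zero]
        positivity
      · exact hsmooth i (Finset.mem_Icc.2 ⟨by omega, by omega⟩) z₁ z₂ h₁ h₂
    have hsum2 : ‖∑ i ∈ Finset.Icc (t - w + 1) t, (f' i z₁ - f' i z₂)‖ ≤
        (w:ℝ) * (L * ‖z₁ - z₂‖) := by
      calc ‖∑ i ∈ Finset.Icc (t - w + 1) t, (f' i z₁ - f' i z₂)‖
          ≤ ∑ i ∈ Finset.Icc (t - w + 1) t, ‖f' i z₁ - f' i z₂‖ := norm_sum_le _ _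
        _ ≤ ∑ _i ∈ Finset.Icc (t - w + 1) t, (L * ‖z₁ - z₂‖) := Finset.sum_le_sum hterm
        _ = (w:ℝ) * (L * ‖z₁ - z₂‖) := by
            rw [Finset.sum_const, hcard t, nsmul_eq_mul]
    rw [hdiff, norm_smul, Real.norm_eq_abs, abs_of_nonneg (by positivity)]
    calc (w:ℝ)⁻¹ * ‖∑ i ∈ Finset.Icc (t - w + 1) t, (f' i z₁ - f' i z₂)‖
        ≤ (w:ℝ)⁻¹ * ((w:ℝ) * (L * ‖z₁ - z₂‖)) :=
          mul_le_mul_of_nonneg_left hsum2 (by positivity)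
      _ = L * ‖z₁ - z₂‖ := by field_simp
  have hφbound : ∀ t, 1 ≤ t → t ≤ (T:ℤ) → ∀ z, g z ≠ ⊤ → |φf t z| ≤ M := by
    intro t ht1 htT z hz
    have hterm : ∀ i ∈ Finset.Icc (t - w + 1) t, |f i z| ≤ M := by
      intro i hi
      rw [Finset.mem_Icc] at hi
      by_cases hi0 : i ≤ 0
      · rw [hf0 i hi0]; simp; linarith
      · exact hbound i (Finset.mem_Icc.2 ⟨by omega, by omega⟩) z hz
    have hsum2 : |∑ i ∈ Finset.Icc (t - w + 1) t, f i z| ≤ (w:ℝ) * M := by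
      calc |∑ i ∈ Finset.Icc (t - w + 1) t, f i z|
          ≤ ∑ i ∈ Finset.Icc (t - w + 1) t, |f i z| := Finset.abs_sum_le_sum_abs _ _
        _ ≤ ∑ _i ∈ Finset.Icc (t - w + 1) t, M := Finset.sum_le_sum hterm
        _ = (w:ℝ) * M := by rw [Finset.sum_const, hcard t, nsmul_eq_mul]
    rw [hφf_app, abs_mul, abs_of_nonneg (by positivity : (0:ℝ) ≤ (w:ℝ)⁻¹)]
    calc (w:ℝ)⁻¹ * |∑ i ∈ Finset.Icc (t - w + 1) t, f i z|
        ≤ (w:ℝ)⁻¹ * ((w:ℝ) * M) := mul_le_mul_of_nonneg_left hsum2 (by positivity)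
      _ = M := by field_simp
  have hφ1 : ∀ z, g z ≠ ⊤ → φf 1 z ≤ M / w := by
    intro z hz
    have hsingle : ∑ i ∈ Finset.Icc ((1:ℤ) - w + 1) 1, f i z = f 1 z := by
      apply Finset.sum_eq_single_of_mem
      · rw [Finset.mem_Icc]; omega
      · intro i hi hne
        rw [Finset.mem_Icc] at hi
        exact hf0 i (by omega) z
    have hf1 : f 1 z ≤ M := by
      have := hbound 1 (Finset.mem_Icc.2 ⟨le_refl _, by exact_mod_cast hT⟩) z hz
      exact (abs_le.1 this).2
    rw [hφf_app, hsingle, div_eq_inv_mul]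
    exact mul_le_mul_of_nonneg_left hf1 (by positivity)
  have hφdiff : ∀ t : ℤ, 2 ≤ t → t ≤ (T:ℤ) → ∀ z, g z ≠ ⊤ →
      φf t z - φf (t-1) z ≤ 2 * M / w := by
    intro t ht2 htT z hz
    have e1 : Finset.Icc (t - w) t = insert (t - w) (Finset.Icc (t - w + 1) t) := by
      ext i; simp only [Finset.mem_Icc, Finset.mem_insert]; omega
    have e2 : Finset.Icc (t - w) t = insert t (Finset.Icc (t - w) (t - 1)) := by
      ext i
      simp only [Finset.mem_Icc, Finset.mem_insert]
      constructor
      · intro h; omega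
      · intro h
        rcases h with h | h
        · omega
        · omega
    have h1 : ∑ i ∈ Finset.Icc (t - w) t, f i z
        = f (t-w) z + ∑ i ∈ Finset.Icc (t - w + 1) t, f i z := by
      rw [e1, Finset.sum_insert (by rw [Finset.mem_Icc]; omega)]
    have h2 : ∑ i ∈ Finset.Icc (t - w) t, f i z
        = f t z + ∑ i ∈ Finset.Icc (t - w) (t - 1), f i z := by
      rw [e2, Finset.sum_insert (by rw [Finset.mem_Icc]; omega)]
    have e3 : t - 1 - (w:ℤ) + 1 = t - w := by ring
    have hft : |f t z| ≤ M := hbound t (Finset.mem_Icc.2 ⟨by omega, htT⟩) z hz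
    have hftw : |f (t - w) z| ≤ M := by
      by_cases h : t - (w:ℤ) ≤ 0
      · rw [hf0 _ h]; simp; linarith
      · exact hbound _ (Finset.mem_Icc.2 ⟨by omega, by omega⟩) z hz
    have hEq : φf t z - φf (t-1) z = (w:ℝ)⁻¹ * (f t z - f (t - w) z) := by
      rw [hφf_app, hφf_app, e3, ← mul_sub]
      congr 1
      linarith [h1, h2]
    rw [hEq]
    have hd : f t z - f (t - w) z ≤ 2 * M := by
      have a1 := (abs_le.1 hft).2
      have a2 := (abs_le.1 hftw).1
      linarith
    calc (w:ℝ)⁻¹ * (f t z - f (t - w) z) ≤ (w:ℝ)⁻¹ * (2 * M) :=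
          mul_le_mul_of_nonneg_left hd (by positivity)
      _ = 2 * M / w := by field_simp
  -- the per-step decrease
  set c : ℝ := (2 - η * L) * η / 2 * (δ / w)^2 with hcdef
  have hc : 0 < c := by
    have h2 : 0 < 2 - η * L := by linarith
    positivity
  have hstep_dec : ∀ t, 1 ≤ t → t ≤ (T:ℤ) → ∀ k : ℕ, 1 ≤ k → k ≤ τ t →
      g (y t k) ≠ ⊤ →
      g (y t (k+1)) ≠ ⊤ ∧
        φf t (y t (k+1)) + G (y t (k+1)) + c ≤ φf t (y t k) + G (y t k) := by
    intro t ht1 htT k hk1 hkτ hyfin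
    have hmemt : t ∈ Finset.Icc (1:ℤ) T := Finset.mem_Icc.2 ⟨ht1, htT⟩
    set yk := y t k with hyk
    set p := y t (k+1) with hp
    set d : EuclideanSpace ℝ (Fin n) := φg t yk with hd
    set u : EuclideanSpace ℝ (Fin n) := yk - η • d with hu
    have hpdef : p = prox u := by
      rw [hp, hu, hd, hφg_app]
      exact hstep t hmemt k hk1 hkτ
    have hppt : IsProxPt g η u p := by
      rw [hpdef]; exact (hprox u).1
    have hpfin : g p ≠ ⊤ := prox_finite hppt hg1 hη
    refine ⟨hpfin, ?_⟩
    have hgyk := hGeq _ hyfin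
    have hgp := hGeq _ hpfin
    have hps := prox_strong hgc hη hppt hgp hgyk
    set q : ℝ := ‖yk - p‖^2 with hq
    set I : ℝ := ⟪d, yk - p⟫ with hI
    set nd : ℝ := ‖d‖^2 with hnd
    have hup : u - p = (yk - p) - η • d := by rw [hu]; module
    have huy : u - yk = -(η • d) := by rw [hu]; module
    have hA : ‖u - p‖^2 = q - 2*(η*I) + η^2*nd := by
      rw [hup, norm_sub_sq_real, real_inner_smul_right, norm_smul, Real.norm_eq_abs,
        abs_of_pos hη, hq, hI, hnd, real_inner_comm]
      ring
    have hB : ‖u - yk‖^2 = η^2*nd := by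
      rw [huy, norm_neg, norm_smul, Real.norm_eq_abs, abs_of_pos hη, mul_pow, hnd]
    rw [hA, hB] at hps
    -- hps : η * G p + 1/2 * (q - 2 η I + η²‖d‖²) + 1/2 * q ≤ η * G yk + 1/2 * η²‖d‖²
    -- hence η * G p + q ≤ η * G yk + η * I
    have hkey : G p + η⁻¹ * q ≤ G yk + I := by
      have hmul : η * (G p + η⁻¹ * q) ≤ η * (G yk + I) := by
        have hinv : η * η⁻¹ = 1 := mul_inv_cancel₀ hη.ne'
        have expand : η * (G p + η⁻¹ * q) = η * G p + (η * η⁻¹) * q := by ring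
        rw [expand, hinv]
        clear_value q I nd
        linarith [hps]
      exact le_of_mul_le_mul_left hmul hη
    -- descent lemma
    have hdesc : φf t p ≤ φf t yk + ⟪d, p - yk⟫ + L/2 * ‖p - yk‖^2 := by
      rw [hd]
      apply descent_lemma (hφgrad t)
      intro s hs
      have hmem : g (yk + s • (p - yk)) ≠ ⊤ := by
        have hrw : yk + s • (p - yk) = (1-s) • yk + s • p := by module
        rw [hrw]
        exact hdom _ _ hyfin hpfin s hs.1 hs.2
      have hlip := hφlip t ht1 htT _ _ hmem hyfin
      have hnr : (yk + s • (p - yk)) - yk = s • (p - yk) := by module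
      calc ‖φg t (yk + s • (p - yk)) - φg t yk‖
          ≤ L * ‖(yk + s • (p - yk)) - yk‖ := hlip
        _ = L * (s * ‖p - yk‖) := by
            rw [hnr, norm_smul, Real.norm_eq_abs, abs_of_nonneg hs.1]
        _ = L * s * ‖p - yk‖ := by ring
    -- residual bound
    have hresb : δ / w < η⁻¹ * ‖yk - p‖ := by
      have := hres t hmemt k hk1 hkτ
      have hrw : proxRes prox η (y t k)
          ((w : ℝ)⁻¹ • ∑ i ∈ Finset.Icc (t - w + 1) t, f' i (y t k)) = η⁻¹ • (yk - p) := by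
        rw [proxRes, hpdef, hu, hd, hφg_app]
      rw [hrw, norm_smul, Real.norm_eq_abs, abs_of_pos (inv_pos.2 hη)] at this
      exact this
    have hqlb : (η * (δ/w))^2 < q := by
      have h1 : η * (δ/w) < ‖yk - p‖ := by
        have := mul_lt_mul_of_pos_left hresb hη
        rw [← mul_assoc, mul_inv_cancel₀ hη.ne', one_mul] at this
        exact this
      have h2 : 0 ≤ η * (δ/w) := by positivity
      rw [hq]
      exact pow_lt_pow_left₀ h1 h2 (by norm_num)
    have hIneg : ⟪d, p - yk⟫ = -I := by
      rw [hI, show p - yk = -(yk - p) by module, inner_neg_right]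
    have hnorm_eq : ‖p - yk‖^2 = q := by rw [hq, norm_sub_rev]
    have hcoefeq : η⁻¹ - L/2 = (2 - η*L)/(2*η) := by
      have hinv : η * η⁻¹ = 1 := mul_inv_cancel₀ hη.ne'
      rw [eq_div_iff (ne_of_gt (by positivity : (0:ℝ) < 2*η))]
      linear_combination (2:ℝ) * hinv
    have hcoef : 0 < η⁻¹ - L/2 := by
      rw [hcoefeq]
      apply div_pos (by linarith) (by linarith)
    have hcle : c ≤ (η⁻¹ - L/2) * q := by
      have h1 : (η⁻¹ - L/2) * (η * (δ/w))^2 ≤ (η⁻¹ - L/2) * q :=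
        mul_le_mul_of_nonneg_left hqlb.le hcoef.le
      have h2 : (η⁻¹ - L/2) * (η * (δ/w))^2 = c := by
        rw [hcdef]
        have h : (η:ℝ) ≠ 0 := hη.ne'
        have h2 : ((w:ℝ)) ≠ 0 := hw0.ne'
        field_simp
      linarith
    rw [hIneg, hnorm_eq] at hdesc
    linarith [hdesc, hkey, hcle]
  -- per-round decrease
  have hround : ∀ t, 1 ≤ t → t ≤ (T:ℤ) → g (x t) ≠ ⊤ →
      g (x (t+1)) ≠ ⊤ ∧
        φf t (x (t+1)) + G (x (t+1)) + (τ t : ℝ) * c ≤ φf t (x t) + G (x t) := by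
    intro t ht1 htT hxfin
    have hmemt : t ∈ Finset.Icc (1:ℤ) T := Finset.mem_Icc.2 ⟨ht1, htT⟩
    have claim : ∀ k : ℕ, 1 ≤ k → k ≤ τ t + 1 → g (y t k) ≠ ⊤ ∧
        φf t (y t k) + G (y t k) + ((k:ℝ) - 1) * c ≤ φf t (x t) + G (x t) := by
      intro k
      induction k with
      | zero => intro h1 _; omega
      | succ m ih =>
        intro _ h2
        by_cases hm : m = 0
        · subst hm
          rw [hinit t hmemt]
          refine ⟨hxfin, ?_⟩
          norm_num
        · have hm1 : 1 ≤ m := by omega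
          have hmτ : m ≤ τ t := by omega
          obtain ⟨hfin, hle⟩ := ih hm1 (by omega)
          obtain ⟨hfin', hdec⟩ := hstep_dec t ht1 htT m hm1 hmτ hfin
          refine ⟨hfin', ?_⟩
          push_cast
          push_cast at hle
          linarith
    obtain ⟨hfin, hle⟩ := claim (τ t + 1) (by omega) le_rfl
    rw [← hnext t hmemt] at hfin hle
    refine ⟨hfin, ?_⟩
    push_cast at hle
    linarith
  -- telescoping
  have htel : ∀ t : ℤ, 1 ≤ t → t ≤ (T:ℤ) →
      g (x (t+1)) ≠ ⊤ ∧
        (∑ s ∈ Finset.Icc (1:ℤ) t, (τ s : ℝ)) * c ≤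
          φf 1 (x 1) + G (x 1) - (φf t (x (t+1)) + G (x (t+1))) + 2*M/w * ((t:ℝ) - 1) := by
    intro t ht1
    refine Int.le_induction (motive := fun t _ => t ≤ (T:ℤ) →
      (g (x (t+1)) ≠ ⊤ ∧
        (∑ s ∈ Finset.Icc (1:ℤ) t, (τ s : ℝ)) * c ≤
          φf 1 (x 1) + G (x 1) - (φf t (x (t+1)) + G (x (t+1))) + 2*M/w * ((t:ℝ) - 1)))
      ?_ ?_ t ht1
    · intro htT
      obtain ⟨hfin, hle⟩ := hround 1 le_rfl (by exact_mod_cast hT)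
        (by rw [hg1]; exact WithTop.coe_ne_top)
      refine ⟨hfin, ?_⟩
      rw [Finset.Icc_self, Finset.sum_singleton]
      have e0 : ((1:ℤ):ℝ) - 1 = 0 := by norm_num
      rw [e0, mul_zero, add_zero]
      linarith
    · intro t ht ih h2
      have htT' : t ≤ (T:ℤ) := by omega
      obtain ⟨hfin, hle⟩ := ih htT'
      obtain ⟨hfin', hdec⟩ := hround (t+1) (by omega) h2 hfin
      have hlink : φf (t+1) (x (t+1)) ≤ φf t (x (t+1)) + 2*M/w := by
        have := hφdiff (t+1) (by omega) h2 (x (t+1)) hfin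
        have e : (t + 1 - 1 : ℤ) = t := by ring
        rw [e] at this
        linarith
      have hsum : ∑ s ∈ Finset.Icc (1:ℤ) (t+1), (τ s:ℝ)
          = (∑ s ∈ Finset.Icc (1:ℤ) t, (τ s:ℝ)) + (τ (t+1) : ℝ) := by
        have e : Finset.Icc (1:ℤ) (t+1) = insert (t+1) (Finset.Icc 1 t) := by
          ext i; simp only [Finset.mem_Icc, Finset.mem_insert]; omega
        rw [e, Finset.sum_insert (by rw [Finset.mem_Icc]; omega)]
        ring
      refine ⟨hfin', ?_⟩
      rw [hsum]
      have ecast : ((t + 1 : ℤ) : ℝ) - 1 = ((t:ℤ):ℝ) := by push_cast; ring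
      rw [ecast]
      have expand : 2*M/w * ((t:ℤ):ℝ) = 2*M/w * (((t:ℤ):ℝ) - 1) + 2*M/w := by ring
      rw [expand]
      linarith [hle, hdec, hlink]
  -- conclusion
  obtain ⟨hfinT, hle⟩ := htel T (by exact_mod_cast hT) le_rfl
  have hx1fin : g (x 1) ≠ ⊤ := by rw [hg1]; exact WithTop.coe_ne_top
  have hφ1b : φf 1 (x 1) ≤ M / w := hφ1 (x 1) hx1fin
  have hGx1 : G (x 1) = g1 := by
    rw [hG]
    show WithTop.untopD 0 (g (x 1)) = g1
    rw [hg1, WithTop.untopD_coe]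
  have hφTb : -M ≤ φf T (x ((T:ℤ)+1)) := by
    have := hφbound T (by exact_mod_cast hT) le_rfl (x ((T:ℤ)+1)) hfinT
    exact (abs_le.1 this).1
  have hGT : 0 ≤ G (x ((T:ℤ)+1)) := hGnn _
  rw [hGx1] at hle
  have hS : (∑ s ∈ Finset.Icc (1:ℤ) (T:ℤ), (τ s:ℝ)) * c
      ≤ g1 + M/w + M + 2*M/w*((T:ℝ)-1) := by
    have ecast : (((T:ℤ)):ℝ) = (T:ℝ) := by push_cast; ring
    rw [ecast] at hle
    linarith
  rw [← mul_le_mul_iff_left₀ hc]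
  have htc : (2 * w * ((w:ℝ) * (g1 + M) + 2 * M * T) / ((2 - η * L) * η * δ ^ 2)) * c
      = g1 + M + 2*M*(T:ℝ)/w := by
    rw [hcdef]
    have h1 : (η:ℝ) ≠ 0 := hη.ne'
    have h2 : ((w:ℝ)) ≠ 0 := hw0.ne'
    have h3 : (δ:ℝ) ≠ 0 := hδ.ne'
    have h4 : (2 - η*L) ≠ 0 := by intro h; rw [sub_eq_zero] at h; linarith [hηL]
    field_simp
  rw [htc]
  have hfin : M/w + 2*M/w*((T:ℝ)-1) ≤ 2*M*(T:ℝ)/w := by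
    have e : M/w + 2*M/w*((T:ℝ)-1) = (2*M*(T:ℝ) - M)/w := by
      field_simp
      ring
    rw [e]
    exact (div_le_div_iff_of_pos_right hw0).2 (by linarith)
  calc (∑ s ∈ Finset.Icc (1:ℤ) (T:ℤ), (τ s:ℝ)) * c
      ≤ g1 + M/w + M + 2*M/w*((T:ℝ)-1) := hS
    _ ≤ g1 + M + 2*M*(T:ℝ)/w := by linarith
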